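/- Let l be a natural number and let S, T, W be subspaces of ℂ^{2l+1} with dim W ≤ 1. Then dim( ((P(T,S) ⊔ P(S,T))ᗮ ⊓ W) ⊔ α(S,T) ) ≤ l + 1, where P(S,T) = (S ⊔ Tᗮ) ⊓ T and α(S,T) = P(T,S) ⊓ (S ⊓ T)ᗮ. -/

import Mathlib

open scoped InnerProductSpace

/-- If `A ⊓ Bᗮ = ⊥` in a finite-dimensional inner product space, then
`finrank A ≤ finrank B`. -/
lemma aux_finrank_le_of_inf_orthogonal_eq_bot
    {E : Type*} [NormedAddCommGroup E] [InnerProductSpace ℂ E] [FiniteDimensional ℂ E]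
    (A B : Submodule ℂ E) (h : A ⊓ Bᗮ = ⊥) :
    Module.finrank ℂ A ≤ Module.finrank ℂ B := by
  have h1 := Submodule.finrank_sup_add_finrank_inf_eq A Bᗮ
  rw [h] at h1
  simp only [finrank_bot, add_zero] at h1
  have h2 : Module.finrank ℂ (A ⊔ Bᗮ : Submodule ℂ E) ≤ Module.finrank ℂ E :=
    Submodule.finrank_le _
  have h3 := Submodule.finrank_add_finrank_orthogonal B
  omega

/-- For subspaces `S, T, W` of `ℂ^{2l+1}` with `dim W ≤ 1`,
`dim(((P(T,S) ⊔ P(S,T))ᗮ ⊓ W) ⊔ α(S,T)) ≤ l + 1`, where `P(S,T) = (S ⊔ Tᗮ) ⊓ T`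
and `α(S,T) = P(T,S) ⊓ (S ⊓ T)ᗮ`. -/
theorem stmt_12 (l : ℕ) (S T W : Submodule ℂ (EuclideanSpace ℂ (Fin (2 * l + 1))))
    (hW : Module.finrank ℂ W ≤ 1) :
    Module.finrank ℂ
        (((((T ⊔ Sᗮ) ⊓ S) ⊔ ((S ⊔ Tᗮ) ⊓ T))ᗮ ⊓ W) ⊔ (((T ⊔ Sᗮ) ⊓ S) ⊓ (S ⊓ T)ᗮ) :
          Submodule ℂ (EuclideanSpace ℂ (Fin (2 * l + 1)))) ≤ l + 1 := by
  set E := EuclideanSpace ℂ (Fin (2 * l + 1))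
  set α : Submodule ℂ E := ((T ⊔ Sᗮ) ⊓ S) ⊓ (S ⊓ T)ᗮ with hα
  -- α ⊓ Tᗮ = ⊥
  have hbot1 : α ⊓ Tᗮ = ⊥ := by
    rw [Submodule.eq_bot_iff]
    rintro x ⟨⟨⟨hxTS, hxS⟩, _⟩, hxT'⟩
    obtain ⟨y, hy, z, hz, hyz⟩ := Submodule.mem_sup.mp hxTS
    have h1 : ⟪y, x⟫_ℂ = 0 := hxT' y hy
    have h2 : ⟪z, x⟫_ℂ = 0 := by
      have := hz x hxS
      exact inner_eq_zero_symm.mp this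
    have : ⟪x, x⟫_ℂ = 0 := by
      calc ⟪x, x⟫_ℂ = ⟪y + z, x⟫_ℂ := by rw [hyz]
        _ = ⟪y, x⟫_ℂ + ⟪z, x⟫_ℂ := inner_add_left _ _ _
        _ = 0 := by rw [h1, h2, add_zero]
    exact inner_self_eq_zero.mp this
  -- α ⊓ T = ⊥
  have hbot2 : α ⊓ T = ⊥ := by
    rw [Submodule.eq_bot_iff]
    rintro x ⟨⟨⟨_, hxS⟩, hxST'⟩, hxT⟩
    have : ⟪x, x⟫_ℂ = 0 := by
      have := hxST' x ⟨hxS, hxT⟩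
      exact this
    exact inner_self_eq_zero.mp this
  -- dim α ≤ min (dim T, dim Tᗮ) ≤ l
  have hαT : Module.finrank ℂ α ≤ Module.finrank ℂ T :=
    aux_finrank_le_of_inf_orthogonal_eq_bot α T hbot1
  have hαT' : Module.finrank ℂ α ≤ Module.finrank ℂ Tᗮ := by
    refine aux_finrank_le_of_inf_orthogonal_eq_bot α Tᗮ ?_
    rwa [Submodule.orthogonal_orthogonal]
  have hT : Module.finrank ℂ T + Module.finrank ℂ Tᗮ = 2 * l + 1 := by
    have := Submodule.finrank_add_finrank_orthogonal T
    simpa using this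
  have hαl : Module.finrank ℂ α ≤ l := by omega
  -- dim of the inf with W
  have hWle : Module.finrank ℂ
      (((((T ⊔ Sᗮ) ⊓ S) ⊔ ((S ⊔ Tᗮ) ⊓ T))ᗮ ⊓ W : Submodule ℂ E)) ≤ 1 :=
    le_trans (Submodule.finrank_mono inf_le_right) hW
  -- combine
  have hsup := Submodule.finrank_sup_add_finrank_inf_eq
    (((((T ⊔ Sᗮ) ⊓ S) ⊔ ((S ⊔ Tᗮ) ⊓ T))ᗮ ⊓ W : Submodule ℂ E)) α
  show Module.finrank ℂ
      ((((((T ⊔ Sᗮ) ⊓ S) ⊔ ((S ⊔ Tᗮ) ⊓ T))ᗮ ⊓ W : Submodule ℂ E)) ⊔ α :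
        Submodule ℂ E) ≤ l + 1
  omega
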